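/- Let V be a normal supervisor on the plant G, let the attack constraint be normal (Σ_{c,A} ⊆ Σ_{o,A}), and suppose AP_dmg ≠ ∅. Then for every successful attacker A, L(V_A/G) ⊆ L(V_{A^sup}/G); in particular, L(V_A/G) ⊆ L(V/G) ∪ ⋃_{(s,σ)∈AP_dmg} En(s, σ). -/
import Mathlib


open scoped Classical

namespace ActuatorAttack

variable {A : Type*}

/-- Natural projection onto a sub-alphabet `S`: erase the letters not in `S`. -/
noncomputable def proj (S : Set A) (l : List A) : List A :=
  l.filter (fun a => decide (a ∈ S))

/-- The least language containing `ε` and closed under appending an event `σ`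
allowed by `allow` at `s`, provided the result lies in the plant language `LG`. -/
inductive Lang (LG : Set (List A)) (allow : List A → Set A) : List A → Prop
  | nil : Lang LG allow []
  | snoc {s : List A} {σ : A} : Lang LG allow s → σ ∈ allow s →
      (s ++ [σ]) ∈ LG → Lang LG allow (s ++ [σ])

/-- The closed-loop language `L(V/G)`. -/
def LVG (LG : Set (List A)) (So : Set A) (V : List A → Set A) :
    Set (List A) :=
  {s | Lang LG (fun t => V (proj So t)) s}

/-- Auxiliary function for the attacker-observation map: `pre` is the prefix
of the supervisor observation sequence already processed. -/
noncomputable def phatAux (V : List A → Set A) (SoA : Set A) :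
    List A → List A → List (List A × Set A)
  | _, [] => []
  | pre, σ :: rest =>
      (proj SoA [σ], V (pre ++ [σ])) :: phatAux V SoA (pre ++ [σ]) rest

/-- The attacker-observation map `P̂`: the i-th letter of `P̂(σ₁⋯σₙ)` is
`(P_{o,A}(σᵢ), V(σ₁⋯σᵢ))`. -/
noncomputable def phat (V : List A → Set A) (SoA : Set A) (w : List A) :
    List (List A × Set A) :=
  phatAux V SoA [] w

/-- The attacked supervisor `V_A`. -/
noncomputable def VA (V : List A → Set A) (ScA SoA : Set A)
    (Att : List (List A × Set A) → Set A) (w : List A) : Set A :=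
  (V w \ ScA) ∪ Att (phat V SoA w)

/-- The attacked closed-loop language `L(V_A/G)`. -/
def LVAG (LG : Set (List A)) (So : Set A) (V : List A → Set A)
    (ScA SoA : Set A) (Att : List (List A × Set A) → Set A) : Set (List A) :=
  {s | Lang LG (fun t =>
      {σ | proj So t ∈ proj So '' LVG LG So V ∧
           σ ∈ VA V ScA SoA Att (proj So t)}) s}

/-- An attacker is enabling if it enables every attackable event enabled by
the supervisor. -/
def Enabling (LG : Set (List A)) (So : Set A) (V : List A → Set A)
    (ScA SoA : Set A) (Att : List (List A × Set A) → Set A) : Prop :=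
  ∀ w ∈ proj So '' LVG LG So V, V w ∩ ScA ⊆ Att (phat V SoA w)

/-- An attacker is successful if the attacked closed-loop language meets the
damage set, and everything outside `P_o⁻¹(P_o(L(V/G)))` lies in `L_dmg·Σ*`. -/
def Successful (LG : Set (List A)) (So : Set A) (V : List A → Set A)
    (ScA SoA : Set A) (Att : List (List A × Set A) → Set A)
    (Ldmg : Set (List A)) : Prop :=
  (LVAG LG So V ScA SoA Att ∩ Ldmg).Nonempty ∧
  LVAG LG So V ScA SoA Att \ (proj So ⁻¹' (proj So '' LVG LG So V)) ⊆
    {t | ∃ d ∈ Ldmg, d <+: t}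

/-- `(s, σ)` is an attack pair. -/
def AttackPair (LG : Set (List A)) (So : Set A) (V : List A → Set A)
    (ScA SoA : Set A) (Ldmg : Set (List A)) (s : List A) (σ : A) : Prop :=
  s ∈ LVG LG So V ∧ σ ∈ ScA ∧ s ++ [σ] ∈ Ldmg ∧
  ∀ s' ∈ LVG LG So V,
    phat V SoA (proj So s) = phat V SoA (proj So s') →
    s' ++ [σ] ∈ LG → s' ++ [σ] ∈ Ldmg

/-- `En(s, σ)`: one-step `σ`-extensions in `L(G)` of strings of `L(V/G)` that
are attacker-observation equivalent to `s`. -/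
def En (LG : Set (List A)) (So : Set A) (V : List A → Set A)
    (SoA : Set A) (s : List A) (σ : A) : Set (List A) :=
  {t | ∃ s' ∈ LVG LG So V, t = s' ++ [σ] ∧ t ∈ LG ∧
       phat V SoA (proj So s) = phat V SoA (proj So s')}

/-- `I(ŵ)`: attackable events `σ` such that some string `s'` of `L(V/G)` with
attacker observation `ŵ` forms an attack pair `(s', σ)`. -/
def ISet (LG : Set (List A)) (So : Set A) (V : List A → Set A)
    (ScA SoA : Set A) (Ldmg : Set (List A))
    (w : List (List A × Set A)) : Set A :=
  {σ | σ ∈ ScA ∧ ∃ s' ∈ LVG LG So V,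
        phat V SoA (proj So s') = w ∧ AttackPair LG So V ScA SoA Ldmg s' σ}

/-- The supremal attacker `A^sup`. -/
def Asup (LG : Set (List A)) (So : Set A) (V : List A → Set A)
    (ScA SoA : Set A) (Ldmg : Set (List A))
    (w : List (List A × Set A)) : Set A :=
  {σ | ∃ s ∈ LVG LG So V, phat V SoA (proj So s) = w ∧
        σ ∈ V (proj So s) ∩ ScA} ∪
  ISet LG So V ScA SoA Ldmg w

section Aux

variable {So SoA ScA : Set A} {LG Ldmg : Set (List A)} {V : List A → Set A}
  {Att : List (List A × Set A) → Set A}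

lemma proj_append (S : Set A) (l₁ l₂ : List A) :
    proj S (l₁ ++ l₂) = proj S l₁ ++ proj S l₂ := by
  simp [proj]

lemma proj_concat (S : Set A) (l : List A) (σ : A) :
    proj S (l ++ [σ]) = proj S l ++ if σ ∈ S then [σ] else [] := by
  by_cases h : σ ∈ S <;> simp [proj, h]

lemma eq_nil_or_concat' (l : List A) : l = [] ∨ ∃ L b, l = L ++ [b] := by
  rcases l.eq_nil_or_concat with h | ⟨L, b, h⟩
  · exact Or.inl h
  · exact Or.inr ⟨L, b, by simpa using h⟩

lemma prefix_concat_cases {l l' : List A} {a : A} (h : l <+: l' ++ [a]) :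
    l <+: l' ∨ l = l' ++ [a] := by
  obtain ⟨r, hr⟩ := h
  rcases eq_nil_or_concat' r with rfl | ⟨r₀, b, rfl⟩
  · right; simpa using hr
  · left
    rw [← List.append_assoc] at hr
    obtain ⟨h1, -⟩ := List.append_inj' hr (by simp)
    exact ⟨r₀, h1⟩

lemma lang_prefix {allow : List A → Set A} {s : List A}
    (h : Lang LG allow s) : ∀ u, u <+: s → Lang LG allow u := by
  induction h with
  | nil =>
    intro u hu
    rw [List.prefix_nil.mp hu]; exact Lang.nil
  | snoc h1 h2 h3 ih =>
    intro u hu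
    rcases prefix_concat_cases hu with h4 | h4
    · exact ih u h4
    · rw [h4]; exact Lang.snoc h1 h2 h3

lemma phatAux_append (V : List A → Set A) (SoA : Set A) :
    ∀ (w₁ pre w₂ : List A),
      phatAux V SoA pre (w₁ ++ w₂) =
        phatAux V SoA pre w₁ ++ phatAux V SoA (pre ++ w₁) w₂ := by
  intro w₁
  induction w₁ with
  | nil => intro pre w₂; simp [phatAux]
  | cons σ rest ih =>
    intro pre w₂
    show (proj SoA [σ], V (pre ++ [σ])) :: phatAux V SoA (pre ++ [σ]) (rest ++ w₂) = _
    rw [ih (pre ++ [σ]) w₂]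
    simp [phatAux, List.append_assoc]

lemma phat_concat (V : List A → Set A) (SoA : Set A) (w : List A) (σ : A) :
    phat V SoA (w ++ [σ]) = phat V SoA w ++ [(proj SoA [σ], V (w ++ [σ]))] := by
  simp [phat, phatAux_append, phatAux]

lemma phatAux_length (V : List A → Set A) (SoA : Set A) :
    ∀ (w pre : List A), (phatAux V SoA pre w).length = w.length := by
  intro w
  induction w with
  | nil => intro pre; simp [phatAux]
  | cons σ rest ih => intro pre; simp [phatAux, ih]

lemma phat_length (V : List A → Set A) (SoA : Set A) (w : List A) :
    (phat V SoA w).length = w.length := phatAux_length V SoA w []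

lemma phat_eq_nil {w : List A} (h : phat V SoA w = []) : w = [] := by
  cases w with
  | nil => rfl
  | cons a l => simp [phat, phatAux] at h

lemma phatAux_take (V : List A → Set A) (SoA : Set A) :
    ∀ (w : List A) (k : ℕ) (pre : List A),
      phatAux V SoA pre (w.take k) = (phatAux V SoA pre w).take k := by
  intro w
  induction w with
  | nil => intro k pre; simp [phatAux]
  | cons σ rest ih =>
    intro k pre
    cases k with
    | zero => simp [phatAux]
    | succ k => simp [phatAux, ih]

lemma phat_take (V : List A → Set A) (SoA : Set A) (k : ℕ) (w : List A) :
    phat V SoA (w.take k) = (phat V SoA w).take k := phatAux_take V SoA w k []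

lemma proj_singleton_of_mem {S : Set A} {a : A} (h : a ∈ S) :
    proj S [a] = [a] := by simp [proj, h]

lemma phat_concat_eq {v : List A} {σ : A} {w' : List A}
    (h : phat V SoA (v ++ [σ]) = phat V SoA w') :
    ∃ v' σ', w' = v' ++ [σ'] ∧ phat V SoA v = phat V SoA v' ∧
      proj SoA [σ] = proj SoA [σ'] ∧ V (v ++ [σ]) = V w' := by
  rcases eq_nil_or_concat' w' with rfl | ⟨v', σ', rfl⟩
  · exfalso
    have h0 : phat V SoA (v ++ [σ]) = [] := h
    have := phat_eq_nil (V := V) (SoA := SoA) h0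
    simp at this
  · rw [phat_concat, phat_concat] at h
    obtain ⟨h1, h2⟩ := List.append_inj' h (by simp)
    simp only [List.cons.injEq, Prod.mk.injEq, and_true] at h2
    exact ⟨v', σ', rfl, h1, h2.1, h2.2⟩

lemma phat_eq_V {w w' : List A} (h : phat V SoA w = phat V SoA w') :
    V w = V w' := by
  rcases eq_nil_or_concat' w with rfl | ⟨v, σ, rfl⟩
  · have h0 : phat V SoA w' = [] := h.symm
    rw [phat_eq_nil (V := V) (SoA := SoA) h0]
  · obtain ⟨v', σ', rfl, -, -, hV⟩ := phat_concat_eq h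
    exact hV

/-- All attackable events occurring in `w` were enabled by the attacker. -/
def Safe (ScA SoA : Set A) (V : List A → Set A)
    (Att : List (List A × Set A) → Set A) (w : List A) : Prop :=
  ∀ v τ, v ++ [τ] <+: w → τ ∈ ScA → τ ∈ Att (phat V SoA v)

lemma safe_mono {w u : List A} (h : u <+: w)
    (hs : Safe ScA SoA V Att w) : Safe ScA SoA V Att u :=
  fun v τ hp hτ => hs v τ (hp.trans h) hτ

lemma safe_transfer (hnormA : ScA ⊆ SoA) {w w' : List A}
    (h : phat V SoA w = phat V SoA w')
    (hs : Safe ScA SoA V Att w) : Safe ScA SoA V Att w' := by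
  intro v' σ' hpre hσ'
  set k := (v' ++ [σ']).length with hk
  have htake' : w'.take k = v' ++ [σ'] := by
    have := List.prefix_iff_eq_take.mp hpre
    exact this.symm
  have heq : phat V SoA (w.take k) = phat V SoA (v' ++ [σ']) := by
    rw [phat_take, h, ← phat_take, htake']
  rcases eq_nil_or_concat' (w.take k) with hnil2 | ⟨v, σ, hvk⟩
  · exfalso
    rw [hnil2] at heq
    have h0 : phat V SoA (v' ++ [σ']) = [] := heq.symm
    have := phat_eq_nil (V := V) (SoA := SoA) h0
    simp at this
  · rw [hvk] at heq
    obtain ⟨v₂, σ₂, he, hphv, hproj, -⟩ := phat_concat_eq heq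
    obtain ⟨hv2, hs2⟩ := List.append_inj' he (by simp)
    have hσ2 : σ' = σ₂ := by simpa using hs2
    have hproj' : proj SoA [σ] = [σ'] := by
      rw [hproj, ← hσ2, proj_singleton_of_mem (hnormA hσ')]
    have hσeq : σ = σ' := by
      by_cases hmem : σ ∈ SoA
      · rw [proj_singleton_of_mem hmem] at hproj'
        simpa using hproj'
      · exfalso; simp [proj, hmem] at hproj'
    have hvpre : v ++ [σ] <+: w := hvk ▸ List.take_prefix k w
    have h5 := hs v σ hvpre (hσeq ▸ hσ')
    rw [hphv, ← hv2] at h5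
    exact hσeq ▸ h5

lemma safe_of_LVAG {t : List A}
    (ht : Lang LG (fun t =>
      {σ | proj So t ∈ proj So '' LVG LG So V ∧
           σ ∈ VA V ScA SoA Att (proj So t)}) t) :
    Safe ScA SoA V Att (proj So t) := by
  induction ht with
  | nil =>
    intro v τ hp hτ
    have : proj So ([] : List A) = [] := by simp [proj]
    rw [this] at hp
    have := List.prefix_nil.mp hp
    simp at this
  | @snoc s σ h1 h2 h3 ih =>
    by_cases hσ : σ ∈ So
    · rw [proj_concat, if_pos hσ]
      intro v τ hp hτ
      rcases prefix_concat_cases hp with h4 | h4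
      · exact ih v τ h4 hτ
      · obtain ⟨hv, hτσ⟩ := List.append_inj' h4 (by simp)
        have hτσ' : τ = σ := by simpa using hτσ
        obtain ⟨-, hva⟩ := h2
        rcases hva with hva | hva
        · exact absurd (hτσ' ▸ hτ) hva.2
        · rw [hv]; exact hτσ' ▸ hva
    · rw [proj_concat, if_neg hσ, List.append_nil]
      exact ih

lemma lvg_last_obs {u : List A}
    (hu : Lang LG (fun t => V (proj So t)) u) :
    ∀ w σ, proj So u = w ++ [σ] → σ ∈ V w := by
  induction hu with
  | nil =>
    intro w σ h
    simp [proj] at h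
  | @snoc s τ h1 h2 h3 ih =>
    intro w σ h
    by_cases hτ : τ ∈ So
    · rw [proj_concat, if_pos hτ] at h
      obtain ⟨h4, h5⟩ := List.append_inj' h (by simp)
      have : τ = σ := by simpa using h5
      rw [← h4, ← this]; exact h2
    · rw [proj_concat, if_neg hτ, List.append_nil] at h
      exact ih w σ h

lemma replay (hso : ScA ⊆ So) {s : List A}
    (hs : Lang LG (fun t => V (proj So t)) s) :
    Safe ScA SoA V Att (proj So s) → s ∈ LVAG LG So V ScA SoA Att := by
  induction hs with
  | nil => intro _; exact Lang.nil
  | @snoc s σ h1 h2 h3 ih =>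
    intro hsafe
    have hpre : proj So s <+: proj So (s ++ [σ]) := by
      rw [proj_append]; exact List.prefix_append _ _
    have ihp := ih (safe_mono hpre hsafe)
    refine Lang.snoc ihp ⟨⟨s, h1, rfl⟩, ?_⟩ h3
    by_cases hσc : σ ∈ ScA
    · have hσSo : σ ∈ So := hso hσc
      have : proj So s ++ [σ] <+: proj So (s ++ [σ]) := by
        rw [proj_concat, if_pos hσSo]
      exact Or.inr (hsafe (proj So s) σ this hσc)
    · exact Or.inl ⟨h2, hσc⟩

lemma key_damage (hso : ScA ⊆ So)
    (hLdV : Ldmg ∩ LVG LG So V = ∅)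
    (hsucc : Successful LG So V ScA SoA Att Ldmg)
    {s' : List A} {σ : A} (hs' : s' ∈ LVG LG So V)
    (hsafe : Safe ScA SoA V Att (proj So s'))
    (hσA : σ ∈ Att (phat V SoA (proj So s')))
    (hσc : σ ∈ ScA) (hσV : σ ∉ V (proj So s')) (hLG : s' ++ [σ] ∈ LG) :
    s' ++ [σ] ∈ Ldmg := by
  have hmem : s' ++ [σ] ∈ LVAG LG So V ScA SoA Att :=
    Lang.snoc (replay hso hs' hsafe) ⟨⟨s', hs', rfl⟩, Or.inr hσA⟩ hLG
  have hnot : s' ++ [σ] ∉ proj So ⁻¹' (proj So '' LVG LG So V) := by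
    intro hin
    rw [Set.mem_preimage, proj_concat, if_pos (hso hσc)] at hin
    obtain ⟨u, hu, hpu⟩ := hin
    exact hσV (lvg_last_obs hu _ _ hpu)
  obtain ⟨d, hd, hdp⟩ := hsucc.2 ⟨hmem, hnot⟩
  rcases prefix_concat_cases hdp with h4 | h4
  · exact absurd ⟨hd, lang_prefix hs' d h4⟩
      (Set.eq_empty_iff_forall_notMem.mp hLdV d)
  · exact h4 ▸ hd

end Aux

/-- If `AP_dmg ≠ ∅`, then for every successful attacker `A`,
`L(V_A/G) ⊆ L(V_{A^sup}/G)`; in particular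
`L(V_A/G) ⊆ L(V/G) ∪ ⋃_{(s,σ)∈AP_dmg} En(s,σ)`. -/
theorem stmt_16 {A : Type*} [Fintype A] (So Sc : Set A) (LG : Set (List A))
    (hnil : [] ∈ LG) (hpref : ∀ s t : List A, s <+: t → t ∈ LG → s ∈ LG)
    (V : List A → Set A) (hV : ∀ w, Scᶜ ⊆ V w)
    (hnormV : Sc ⊆ So)
    (ScA SoA : Set A) (hcA : ScA ⊆ Sc) (hoA : SoA ⊆ So)
    (hnormA : ScA ⊆ SoA)
    (Ldmg : Set (List A)) (hLd : Ldmg ⊆ LG)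
    (hLdV : Ldmg ∩ LVG LG So V = ∅)
    (hAP : ∃ s σ, AttackPair LG So V ScA SoA Ldmg s σ)
    (Att : List (List A × Set A) → Set A) (hAtt : ∀ x, Att x ⊆ ScA)
    (hsucc : Successful LG So V ScA SoA Att Ldmg) :
    LVAG LG So V ScA SoA Att ⊆
      LVAG LG So V ScA SoA (Asup LG So V ScA SoA Ldmg) ∧
    LVAG LG So V ScA SoA Att ⊆
      LVG LG So V ∪
        ⋃ p ∈ {p : List A × A | AttackPair LG So V ScA SoA Ldmg p.1 p.2},
          En LG So V SoA p.1 p.2 := by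
  classical
  suffices key : ∀ t, t ∈ LVAG LG So V ScA SoA Att →
      t ∈ LVAG LG So V ScA SoA (Asup LG So V ScA SoA Ldmg) ∧
      (t ∈ LVG LG So V ∨ ∃ s0 σ0, AttackPair LG So V ScA SoA Ldmg s0 σ0 ∧
        t ∈ En LG So V SoA s0 σ0 ∧ proj So t ∉ proj So '' LVG LG So V) by
    constructor
    · intro t ht; exact (key t ht).1
    · intro t ht
      rcases (key t ht).2 with h | ⟨s0, σ0, hap, hen, -⟩
      · exact Or.inl h
      · exact Or.inr (Set.mem_biUnion
          (show ((s0, σ0) : List A × A) ∈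
            {p : List A × A | AttackPair LG So V ScA SoA Ldmg p.1 p.2} from hap) hen)
  intro t ht
  have ht' : Lang LG (fun t =>
      {σ | proj So t ∈ proj So '' LVG LG So V ∧
           σ ∈ VA V ScA SoA Att (proj So t)}) t := ht
  clear ht
  induction ht' with
  | nil => exact ⟨Lang.nil, Or.inl Lang.nil⟩
  | @snoc s σ h1 h2 h3 ih =>
    obtain ⟨himg, hva⟩ := h2
    obtain ⟨ihA, ihD⟩ := ih
    have hsLVG : s ∈ LVG LG So V := by
      rcases ihD with h | ⟨_, _, _, _, hnot⟩
      · exact h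
      · exact absurd himg hnot
    rcases hva with hva | hva
    · exact ⟨Lang.snoc ihA ⟨himg, Or.inl hva⟩ h3,
        Or.inl (Lang.snoc hsLVG hva.1 h3)⟩
    · have hσc : σ ∈ ScA := hAtt _ hva
      have hσSo : σ ∈ So := hoA (hnormA hσc)
      by_cases hσV : σ ∈ V (proj So s)
      · exact ⟨Lang.snoc ihA ⟨himg,
            Or.inr (Or.inl ⟨s, hsLVG, rfl, hσV, hσc⟩)⟩ h3,
          Or.inl (Lang.snoc hsLVG hσV h3)⟩
      · have hsafe : Safe ScA SoA V Att (proj So s) := safe_of_LVAG h1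
        have hap : AttackPair LG So V ScA SoA Ldmg s σ := by
          refine ⟨hsLVG, hσc, key_damage (fun a ha => hoA (hnormA ha))
            hLdV hsucc hsLVG hsafe hva hσc hσV h3, ?_⟩
          intro s' hs' hph hLG'
          refine key_damage (fun a ha => hoA (hnormA ha))
            hLdV hsucc hs' (safe_transfer hnormA hph hsafe) ?_ hσc ?_ hLG'
          · rwa [← hph]
          · rwa [← phat_eq_V hph]
        have hnot : proj So (s ++ [σ]) ∉ proj So '' LVG LG So V := by
          rw [proj_concat, if_pos hσSo]
          rintro ⟨u, hu, hpu⟩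
          exact hσV (lvg_last_obs hu _ _ hpu)
        exact ⟨Lang.snoc ihA ⟨himg,
            Or.inr (Or.inr ⟨hσc, s, hsLVG, rfl, hap⟩)⟩ h3,
          Or.inr ⟨s, σ, hap, ⟨s, hsLVG, rfl, h3, rfl⟩, hnot⟩⟩

end ActuatorAttack
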